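/- Let L be a finite atomistic lattice. The map ξ : L → Fl(𝒯_L), x ↦ xξ = {a ∈ At(L) : a ≤ x}, is injective and satisfies x ≤ y if and only if xξ ⊆ yξ; hence ξ is a lattice isomorphism of L onto its image Lξ ⊆ Fl(𝒯_L). -/

import Mathlib

universe u v

/-- `F ⊆ V` is a flat of the simplicial complex `(V, H)`: for every `I ∈ H` with
`I ⊆ F` and every `p ∈ V \ F`, `I ∪ {p} ∈ H`. -/
def IsCFlat {α : Type u} (V : Set α) (H : Set (Set α)) (F : Set α) : Prop :=
  F ⊆ V ∧ ∀ I ∈ H, I ⊆ F → ∀ p ∈ V \ F, insert p I ∈ H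

/-- `(V, H)` is a finite simplicial complex: `V` is finite and nonempty, and
`H ⊆ 2^V` is nonempty and closed under taking subsets. -/
def IsCpx {α : Type u} (V : Set α) (H : Set (Set α)) : Prop :=
  V.Finite ∧ V.Nonempty ∧ H.Nonempty ∧ (∀ X ∈ H, X ⊆ V) ∧ ∀ X ∈ H, ∀ Y ⊆ X, Y ∈ H

/-- `X` is a transversal of the successive differences for some chain
`F 0 ⊂ F 1 ⊂ … ⊂ F k` of flats of `(V, H)`: `X` admits an enumeration
`x 0, …, x (k-1)` with `x i ∈ F (i+1) \ F i`. -/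
def TransvSD {α : Type u} (V : Set α) (H : Set (Set α)) (X : Set α) : Prop :=
  ∃ (k : ℕ) (F : Fin (k + 1) → Set α) (x : Fin k → α),
    (∀ i, IsCFlat V H (F i)) ∧ StrictMono F ∧
    Function.Injective x ∧ X = Set.range x ∧
    ∀ i : Fin k, x i ∈ F i.succ \ F i.castSucc

/-- `(V, H)` is boolean representable: every `X ∈ H` is a transversal of the
successive differences for some chain of flats of `(V, H)`. -/
def BoolRep {α : Type u} (V : Set α) (H : Set (Set α)) : Prop :=
  ∀ X ∈ H, TransvSD V H X

/-- `xξ` : the set of atoms of `L` lying below `x`. -/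
def latxi (L : Type u) [Lattice L] [OrderBot L] (x : L) : Set L :=
  {a | IsAtom a ∧ a ≤ x}

/-- `T_L` : the set of transversals of chains in `L`, i.e. sets of atoms `A`
admitting an enumeration `e 0, …, e (m-1)` and a chain `c 0 < … < c m` in `L`
with `e i ∈ (c (i+1))ξ \ (c i)ξ`. -/
def TLat (L : Type u) [Lattice L] [OrderBot L] : Set (Set L) :=
  {A | ∃ (m : ℕ) (c : Fin (m + 1) → L) (e : Fin m → L), StrictMono c ∧
      Function.Injective e ∧ A = Set.range e ∧
      ∀ i : Fin m, e i ∈ latxi L (c i.succ) \ latxi L (c i.castSucc)}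

/-- A lattice is atomistic if every element is a join of atoms. -/
def AtomisticLat (L : Type u) [Lattice L] [OrderBot L] : Prop :=
  ∀ x : L, ∃ s : Finset L, (∀ a ∈ s, IsAtom a) ∧ x = s.sup id


lemma le_iff_xi {L : Type u} [Lattice L] [OrderBot L] (hA : AtomisticLat L)
    (x y : L) : x ≤ y ↔ latxi L x ⊆ latxi L y := by
  constructor
  · intro h a ha
    exact ⟨ha.1, ha.2.trans h⟩
  · intro h
    obtain ⟨s, hs, hx⟩ := hA x
    rw [hx]
    apply Finset.sup_le
    intro a ha
    have hax : a ≤ x := hx ▸ Finset.le_sup (f := id) ha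
    exact (h ⟨hs a ha, hax⟩).2

lemma xi_flat {L : Type u} [Lattice L] [OrderBot L] (x : L) :
    IsCFlat {a : L | IsAtom a} (TLat L) (latxi L x) := by
  constructor
  · intro a ha; exact ha.1
  · rintro I ⟨m, c, e, hc, he, hIe, hmem⟩ hIx p ⟨hpA, hpF⟩
    have hpA : IsAtom p := hpA
    have hpx : ¬ p ≤ x := fun h => hpF ⟨hpA, h⟩
    have hex : ∀ i : Fin m, e i ≤ x := by
      intro i
      have : e i ∈ I := hIe ▸ Set.mem_range_self i
      exact (hIx this).2
    have heA : ∀ i : Fin m, IsAtom (e i) := fun i => (hmem i).1.1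
    refine ⟨m + 1, Fin.snoc (fun i => c i ⊓ x) ((c (Fin.last m) ⊓ x) ⊔ p),
      Fin.snoc e p, ?_, ?_, ?_, ?_⟩
    · rw [Fin.strictMono_iff_lt_succ]
      intro i
      refine Fin.lastCases ?_ ?_ i
      · rw [Fin.succ_last, Fin.snoc_last, Fin.snoc_castSucc]
        rw [left_lt_sup]
        intro h
        exact hpx (h.trans inf_le_right)
      · intro j
        rw [Fin.succ_castSucc, Fin.snoc_castSucc, Fin.snoc_castSucc]
        have h1 : c j.castSucc ⊓ x ≤ c j.succ ⊓ x :=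
          inf_le_inf_right x (hc (Fin.castSucc_lt_succ (i := j))).le
        refine lt_of_le_not_ge h1 (fun h2 => ?_)
        have : e j ≤ c j.castSucc :=
          (le_inf (hmem j).1.2 (hex j)).trans (h2.trans inf_le_left)
        exact (hmem j).2 ⟨heA j, this⟩
    · intro i j hij
      rcases Fin.eq_castSucc_or_eq_last i with ⟨i', rfl⟩ | rfl <;>
        rcases Fin.eq_castSucc_or_eq_last j with ⟨j', rfl⟩ | rfl
      · rw [Fin.snoc_castSucc, Fin.snoc_castSucc] at hij
        exact congrArg Fin.castSucc (he hij)
      · rw [Fin.snoc_last, Fin.snoc_castSucc] at hij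
        exact absurd (hex i') (fun h => hpx (hij ▸ h))
      · rw [Fin.snoc_last, Fin.snoc_castSucc] at hij
        exact absurd (hex j') (fun h => hpx (hij ▸ h))
      · rfl
    · rw [hIe]
      ext a
      simp only [Set.mem_insert_iff, Set.mem_range]
      constructor
      · rintro (rfl | ⟨i, rfl⟩)
        · exact ⟨Fin.last m, Fin.snoc_last _ _⟩
        · exact ⟨i.castSucc, Fin.snoc_castSucc _ _ _⟩
      · rintro ⟨i, rfl⟩
        refine Fin.lastCases ?_ ?_ i
        · rw [Fin.snoc_last]; exact Or.inl rfl
        · intro j; rw [Fin.snoc_castSucc]; exact Or.inr ⟨j, rfl⟩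
    · intro i
      refine Fin.lastCases ?_ ?_ i
      · rw [Fin.snoc_last, Fin.succ_last, Fin.snoc_last, Fin.snoc_castSucc]
        constructor
        · exact ⟨hpA, le_sup_right⟩
        · rintro ⟨_, h⟩
          exact hpx (h.trans inf_le_right)
      · intro j
        rw [Fin.snoc_castSucc, Fin.succ_castSucc, Fin.snoc_castSucc,
          Fin.snoc_castSucc]
        constructor
        · exact ⟨heA j, le_inf (hmem j).1.2 (hex j)⟩
        · rintro ⟨_, h⟩
          exact (hmem j).2 ⟨heA j, h.trans inf_le_left⟩


/-- For a finite atomistic lattice `L`, the map `ξ : x ↦ {a ∈ At(L) : a ≤ x}` is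
injective, satisfies `x ≤ y ↔ xξ ⊆ yξ`, and is hence a lattice (order)
isomorphism of `L` onto its image `Lξ ⊆ Fl(𝒯_L)` ordered by inclusion. -/
theorem stmt10 (L : Type u) [Lattice L] [Fintype L] [OrderBot L]
    (hA : AtomisticLat L) :
    Function.Injective (latxi L) ∧
    (∀ x y : L, x ≤ y ↔ latxi L x ⊆ latxi L y) ∧
    (∀ x : L, latxi L x ∈ {F : Set L | IsCFlat {a : L | IsAtom a} (TLat L) F}) ∧
    Nonempty (L ≃o {F : Set L // F ∈ Set.range (latxi L)}) := by
  have hle := le_iff_xi hA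
  have hinj : Function.Injective (latxi L) := by
    intro a b hab
    exact le_antisymm ((hle a b).2 hab.le) ((hle b a).2 hab.ge)
  refine ⟨hinj, hle, fun x => xi_flat x, ⟨?_⟩⟩
  exact
    { toEquiv := Equiv.ofInjective (latxi L) hinj
      map_rel_iff' := by
        intro a b
        simp only [Equiv.ofInjective_apply]
        exact ((hle a b).symm) }
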